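/- In any CAFE(12;G), each of the 12 solitary pairs is covered in exactly one row, and each of the 12 rows covers exactly one solitary pair; that is, the map sending each solitary pair {(i,a),(j,b)} to the row r with A r i = a and A r j = b is a well-defined bijection between the set of solitary pairs and Fin 12. -/
import Mathlib


/-- The forbidden-edge graph `G` on vertex set `Fin 4 × Fin 3`. -/
def EdgeSet : Set (Sym2 (Fin 4 × Fin 3)) :=
  {s((0, 0), (1, 0)), s((2, 0), (3, 0)), s((0, 1), (2, 1)),
   s((1, 1), (3, 1)), s((0, 2), (3, 2)), s((1, 2), (2, 2))}

/-- A row `c` avoids `G` if no pair of its entries forms an edge of `G`. -/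
def Avoids (c : Fin 4 → Fin 3) : Prop :=
  ∀ i j : Fin 4, i ≠ j → s((i, c i), (j, c j)) ∉ EdgeSet

/-- A covering array with forbidden edges `CAFE(N; G)`. -/
def IsCAFE {N : ℕ} (A : Fin N → Fin 4 → Fin 3) : Prop :=
  (∀ r, Avoids (A r)) ∧
  ∀ i j : Fin 4, i ≠ j → ∀ a b : Fin 3,
    s((i, a), (j, b)) ∉ EdgeSet → ∃ r, A r i = a ∧ A r j = b

/-- The pair `{(i,a),(j,b)}` (with `i ≠ j`, `a ≠ b`) is solitary if it is disjoint
from every (in fact the unique) edge of `G` joining column `i` to column `j`. -/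
def Solitary (i j : Fin 4) (a b : Fin 3) : Prop :=
  i ≠ j ∧ a ≠ b ∧ ∀ c d : Fin 3, s((i, c), (j, d)) ∈ EdgeSet → a ≠ c ∧ b ≠ d

/-- The set of solitary pairs, as unordered pairs of vertices. -/
def SolitaryPairs : Set (Sym2 (Fin 4 × Fin 3)) :=
  {p | ∃ (i j : Fin 4) (a b : Fin 3), p = s((i, a), (j, b)) ∧ Solitary i j a b}

instance : DecidablePred (· ∈ EdgeSet) := fun s =>
  decidable_of_iff (s = s((0, 0), (1, 0)) ∨ s = s((2, 0), (3, 0)) ∨ s = s((0, 1), (2, 1)) ∨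
    s = s((1, 1), (3, 1)) ∨ s = s((0, 2), (3, 2)) ∨ s = s((1, 2), (2, 2)))
    (by simp [EdgeSet])

instance (c : Fin 4 → Fin 3) : Decidable (Avoids c) := by unfold Avoids; infer_instance
instance (i j : Fin 4) (a b : Fin 3) : Decidable (Solitary i j a b) := by
  unfold Solitary; infer_instance

set_option maxRecDepth 10000 in
lemma K1 : ∀ c : Fin 4 → Fin 3, Avoids c → ∀ i j i' j' : Fin 4,
    Solitary i j (c i) (c j) → Solitary i' j' (c i') (c j') →
    s((i, c i), (j, c j)) = s((i', c i'), (j', c j')) := by decide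

/-- The ordered (i < j) solitary tuples. -/
def T : Finset (Fin 4 × Fin 4 × Fin 3 × Fin 3) :=
  Finset.univ.filter (fun t => t.1 < t.2.1 ∧ Solitary t.1 t.2.1 t.2.2.1 t.2.2.2)

lemma cardT : T.card = 12 := by decide

lemma mem_T {t : Fin 4 × Fin 4 × Fin 3 × Fin 3} :
    t ∈ T ↔ t.1 < t.2.1 ∧ Solitary t.1 t.2.1 t.2.2.1 t.2.2.2 := by
  simp [T]

lemma sym2_tuple_eq {i j i' j' : Fin 4} {a b a' b' : Fin 3} (hij : i < j) (hij' : i' < j')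
    (h : s(((i : Fin 4), a), (j, b)) = s((i', a'), (j', b'))) :
    i = i' ∧ j = j' ∧ a = a' ∧ b = b' := by
  rw [Sym2.eq_iff] at h
  rcases h with ⟨h1, h2⟩ | ⟨h1, h2⟩
  · obtain ⟨rfl, rfl⟩ := Prod.mk.injEq .. ▸ h1
    obtain ⟨rfl, rfl⟩ := Prod.mk.injEq .. ▸ h2
    exact ⟨rfl, rfl, rfl, rfl⟩
  · obtain ⟨rfl, rfl⟩ := Prod.mk.injEq .. ▸ h1
    obtain ⟨rfl, rfl⟩ := Prod.mk.injEq .. ▸ h2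
    exact absurd (hij.trans hij') (lt_irrefl _)

theorem solitary_pairs_biject_rows (A : Fin 12 → Fin 4 → Fin 3) (hA : IsCAFE A) :
    (∀ (i j : Fin 4) (a b : Fin 3), Solitary i j a b →
      ∃! r : Fin 12, A r i = a ∧ A r j = b) ∧
    (∀ r : Fin 12, ∃! p : Sym2 (Fin 4 × Fin 3),
      p ∈ SolitaryPairs ∧ ∃ i j : Fin 4, p = s((i, A r i), (j, A r j))) := by
  -- non-edge from solitary
  have hne : ∀ i j (a b : Fin 3), Solitary i j a b → s((i, a), (j, b)) ∉ EdgeSet := by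
    intro i j a b hs h
    exact (hs.2.2 a b h).1 rfl
  -- choose a covering row for each solitary tuple
  have hcov : ∀ t ∈ T, ∃ r : Fin 12, A r t.1 = t.2.2.1 ∧ A r t.2.1 = t.2.2.2 := by
    intro t ht
    obtain ⟨_, hs⟩ := mem_T.mp ht
    exact hA.2 t.1 t.2.1 hs.1 t.2.2.1 t.2.2.2 (hne _ _ _ _ hs)
  choose f hf using hcov
  -- f is injective
  have hinj : ∀ t₁ t₂ (h₁ : t₁ ∈ T) (h₂ : t₂ ∈ T), f t₁ h₁ = f t₂ h₂ → t₁ = t₂ := by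
    intro t₁ t₂ h₁ h₂ he
    obtain ⟨hlt₁, hs₁⟩ := mem_T.mp h₁
    obtain ⟨hlt₂, hs₂⟩ := mem_T.mp h₂
    obtain ⟨hc₁, hc₂⟩ := hf t₁ h₁
    obtain ⟨hc₃, hc₄⟩ := hf t₂ h₂
    rw [he] at hc₁ hc₂
    set r := f t₂ h₂
    have key := K1 (A r) (hA.1 r) t₁.1 t₁.2.1 t₂.1 t₂.2.1
      (by rw [hc₁, hc₂]; exact hs₁) (by rw [hc₃, hc₄]; exact hs₂)
    rw [hc₁, hc₂, hc₃, hc₄] at key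
    obtain ⟨e1, e2, e3, e4⟩ := sym2_tuple_eq hlt₁ hlt₂ key
    exact Prod.ext e1 (Prod.ext e2 (Prod.ext e3 e4))
  -- surjectivity onto all rows
  have hsurj : ∀ r : Fin 12, ∃ t, ∃ ht : t ∈ T, r = f t ht := by
    have := Finset.surj_on_of_inj_on_of_card_le (s := T) (t := (Finset.univ : Finset (Fin 12)))
      (fun t ht => f t ht) (fun t ht => Finset.mem_univ _) hinj
      (by rw [cardT]; simp)
    intro r
    exact this r (Finset.mem_univ r)
  -- a row covers a solitary tuple:
  have hrow : ∀ r : Fin 12, ∀ i j (a b : Fin 3), Solitary i j a b →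
      A r i = a → A r j = b → ∀ t (ht : t ∈ T), r = f t ht →
      s((i, a), (j, b)) = s((t.1, t.2.2.1), (t.2.1, t.2.2.2)) := by
    intro r i j a b hs ha hb t ht hrt
    obtain ⟨hc₁, hc₂⟩ := hf t ht
    rw [← hrt] at hc₁ hc₂
    obtain ⟨_, hst⟩ := mem_T.mp ht
    have key := K1 (A r) (hA.1 r) i j t.1 t.2.1
      (by rw [ha, hb]; exact hs) (by rw [hc₁, hc₂]; exact hst)
    rw [ha, hb, hc₁, hc₂] at key
    exact key
  constructor
  · intro i j a b hs
    obtain ⟨r, hr⟩ := hA.2 i j hs.1 a b (hne _ _ _ _ hs)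
    refine ⟨r, hr, ?_⟩
    intro r' hr'
    obtain ⟨t, ht, hrt⟩ := hsurj r
    obtain ⟨t', ht', hrt'⟩ := hsurj r'
    have e1 := hrow r i j a b hs hr.1 hr.2 t ht hrt
    have e2 := hrow r' i j a b hs hr'.1 hr'.2 t' ht' hrt'
    obtain ⟨hlt, _⟩ := mem_T.mp ht
    obtain ⟨hlt', _⟩ := mem_T.mp ht'
    have := sym2_tuple_eq hlt' hlt (e2.symm.trans e1)
    have htt : t' = t :=
      Prod.ext this.1 (Prod.ext this.2.1 (Prod.ext this.2.2.1 this.2.2.2))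
    subst htt
    rw [hrt', hrt]
  · intro r
    obtain ⟨t, ht, hrt⟩ := hsurj r
    obtain ⟨hlt, hst⟩ := mem_T.mp ht
    obtain ⟨hc₁, hc₂⟩ := hf t ht
    rw [← hrt] at hc₁ hc₂
    refine ⟨s((t.1, t.2.2.1), (t.2.1, t.2.2.2)),
      ⟨⟨t.1, t.2.1, t.2.2.1, t.2.2.2, rfl, hst⟩, ⟨t.1, t.2.1, by rw [hc₁, hc₂]⟩⟩, ?_⟩
    rintro q ⟨⟨i0, j0, a0, b0, rfl, hs0⟩, ⟨i', j', hq'⟩⟩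
    -- row r covers (i0,a0),(j0,b0)
    rw [Sym2.eq_iff] at hq'
    have hcov0 : A r i0 = a0 ∧ A r j0 = b0 := by
      rcases hq' with ⟨h1, h2⟩ | ⟨h1, h2⟩
      · obtain ⟨rfl, rfl⟩ := Prod.mk.injEq .. ▸ h1
        obtain ⟨rfl, rfl⟩ := Prod.mk.injEq .. ▸ h2
        exact ⟨rfl, rfl⟩
      · obtain ⟨rfl, rfl⟩ := Prod.mk.injEq .. ▸ h1
        obtain ⟨rfl, rfl⟩ := Prod.mk.injEq .. ▸ h2
        exact ⟨rfl, rfl⟩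
    exact hrow r i0 j0 a0 b0 hs0 hcov0.1 hcov0.2 t ht hrt
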